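/- Fix an integer N ≥ 2 and a real number q with 0 < q < 1. Let n be a positive odd integer and set m = −n, s = q^{−N(n−1)/(2n)} and t = q^{−N(n+1)/(2n)}. Then s^m t^n = q^{−N}, and for every x ∈ ℂ \ {0} at which all theta factors occurring are nonzero, Y_{−n,n}(x;s,t) = 1. -/

import Mathlib

/-- Infinite `q`-Pochhammer symbol `(z;p)_∞ = ∏_{j≥0} (1 − z pʲ)`. -/
noncomputable def qPoch (z p : ℂ) : ℂ := ∏' j : ℕ, (1 - z * p ^ j)

/-- Jacobi Θ function `Θ_p(z) = (z;p)_∞ (p z⁻¹;p)_∞ (p;p)_∞`. -/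
noncomputable def ThetaF (p z : ℂ) : ℂ := qPoch z p * qPoch (p * z⁻¹) p * qPoch p p

/-- The function
`U(z) = q^{2/N−2} · Θ_{q^{2N}}(q²z²) Θ_{q^{2N}}(q²z⁻²) / (Θ_{q^{2N}}(z²) Θ_{q^{2N}}(z⁻²))`. -/
noncomputable def Ufun (N : ℕ) (q : ℝ) (z : ℂ) : ℂ :=
  ((q ^ ((2 : ℝ) / N - 2) : ℝ) : ℂ) *
    (ThetaF ((q : ℂ) ^ (2 * N)) ((q : ℂ) ^ 2 * z ^ 2) *
      ThetaF ((q : ℂ) ^ (2 * N)) ((q : ℂ) ^ 2 * z⁻¹ ^ 2)) /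
    (ThetaF ((q : ℂ) ^ (2 * N)) (z ^ 2) * ThetaF ((q : ℂ) ^ (2 * N)) (z⁻¹ ^ 2))

/-- All four theta factors occurring in `U(z)` are nonzero. -/
def thetaReg (N : ℕ) (q : ℝ) (z : ℂ) : Prop :=
  ThetaF ((q : ℂ) ^ (2 * N)) ((q : ℂ) ^ 2 * z ^ 2) ≠ 0 ∧
  ThetaF ((q : ℂ) ^ (2 * N)) ((q : ℂ) ^ 2 * z⁻¹ ^ 2) ≠ 0 ∧
  ThetaF ((q : ℂ) ^ (2 * N)) (z ^ 2) ≠ 0 ∧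
  ThetaF ((q : ℂ) ^ (2 * N)) (z⁻¹ ^ 2) ≠ 0

/-- `F_a(x;s) = ∏_{k=0}^{a−1} U(sᵏx)` for `a > 0`, `F₀ = 1`, and
`F_a(x;s) = ∏_{k=1}^{−a} U(s⁻ᵏx)⁻¹` for `a < 0`. -/
noncomputable def Ffun (N : ℕ) (q : ℝ) (s x : ℂ) (a : ℤ) : ℂ :=
  if 0 < a then ∏ k ∈ Finset.range a.toNat, Ufun N q (s ^ (k : ℕ) * x)
  else ∏ k ∈ Finset.range (-a).toNat, (Ufun N q (s ^ (-(k : ℤ) - 1) * x))⁻¹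

/-- The structure function
`Y_{m,n}(x;s,t) = F_n(x;t) F_{−n}(x;t) / (F_m(x;s) F_{−m}(x;s))`. -/
noncomputable def Yfun (N : ℕ) (q : ℝ) (s t x : ℂ) (m n : ℤ) : ℂ :=
  Ffun N q t x n * Ffun N q t x (-n) / (Ffun N q s x m * Ffun N q s x (-m))

open Complex Filter

lemma multipliable_qPochTerm (z p : ℂ) (hp : ‖p‖ < 1) :
    Multipliable (fun j : ℕ => 1 - z * p ^ j) := by
  by_cases hzero : ∃ j : ℕ, 1 - z * p ^ j = 0
  · obtain ⟨j0, hj0⟩ := hzero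
    refine ⟨0, ?_⟩
    have h : ∀ᶠ S : Finset ℕ in atTop, ∏ i ∈ S, (1 - z * p ^ i) = 0 := by
      filter_upwards [Filter.eventually_ge_atTop ({j0} : Finset ℕ)] with S hS
      exact Finset.prod_eq_zero (hS (Finset.mem_singleton_self j0)) hj0
    exact Tendsto.congr' (h.mono fun S hS => hS.symm) tendsto_const_nhds
  · push_neg at hzero
    refine Complex.multipliable_of_summable_log ?_
    have htend : Tendsto (fun n : ℕ => ‖z * p ^ n‖) atTop (nhds 0) := by
      have h1 : Tendsto (fun n : ℕ => p ^ n) atTop (nhds 0) :=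
        tendsto_pow_atTop_nhds_zero_of_norm_lt_one hp
      have h2 := (h1.const_mul z).norm
      simpa using h2
    have hev : ∀ᶠ n : ℕ in atTop, ‖Complex.log (1 - z * p ^ n)‖ ≤ 3/2 * ‖z * p ^ n‖ := by
      filter_upwards [htend.eventually_le_const (by norm_num : (0:ℝ) < 1/2)] with n hn
      have := Complex.norm_log_one_add_half_le_self (z := -(z * p ^ n)) (by simpa using hn)
      simpa [sub_eq_add_neg] using this
    refine Summable.of_norm_bounded_eventually_nat (g := fun n => 3/2 * ‖z * p ^ n‖) ?_ hev
    have : Summable (fun n : ℕ => ‖p‖ ^ n) := summable_geometric_of_lt_one (norm_nonneg p) hp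
    simpa [norm_mul, norm_pow, mul_assoc] using ((this.mul_left ‖z‖).mul_left (3/2))

lemma qPoch_peel (p z : ℂ) (hp : ‖p‖ < 1) :
    qPoch z p = (1 - z) * qPoch (p * z) p := by
  have hm : Multipliable fun n : ℕ => 1 - z * p ^ (n + 1) :=
    (multipliable_qPochTerm (z * p) p hp).congr fun n => by rw [pow_succ]; ring
  rw [qPoch, tprod_eq_zero_mul' (M := ℂ) (f := fun j : ℕ => 1 - z * p ^ j) hm, pow_zero,
    mul_one, qPoch]
  congr 1
  refine tprod_congr fun j => ?_
  rw [pow_succ]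
  ring

lemma theta_shift (p z : ℂ) (hp : ‖p‖ < 1) (hp0 : p ≠ 0) (hz : z ≠ 0) :
    ThetaF p (p * z) = -z⁻¹ * ThetaF p z := by
  have h1 : qPoch z p = (1 - z) * qPoch (p * z) p := qPoch_peel p z hp
  have h2 : qPoch z⁻¹ p = (1 - z⁻¹) * qPoch (p * z⁻¹) p := qPoch_peel p z⁻¹ hp
  have h3 : p * (p * z)⁻¹ = z⁻¹ := by field_simp
  have hz1 : (1 : ℂ) - z⁻¹ = -z⁻¹ * (1 - z) := by field_simp; ring
  rw [ThetaF, h3, h2, ThetaF, h1, hz1]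
  ring

lemma theta_shift_inv (p z : ℂ) (hp : ‖p‖ < 1) (hp0 : p ≠ 0) (hz : z ≠ 0) :
    ThetaF p (p⁻¹ * z) = -(p⁻¹ * z) * ThetaF p z := by
  have h := theta_shift p (p⁻¹ * z) hp hp0 (mul_ne_zero (inv_ne_zero hp0) hz)
  have hpz : p * (p⁻¹ * z) = z := by field_simp
  rw [hpz] at h
  rw [h]
  have : p⁻¹ * z ≠ 0 := mul_ne_zero (inv_ne_zero hp0) hz
  field_simp

lemma U_shift (N : ℕ) (hNpos : 0 < N) (q : ℝ) (hq0 : 0 < q) (hq1 : q < 1)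
    (z : ℂ) (hz : z ≠ 0) :
    Ufun N q (((q : ℂ) ^ N)⁻¹ * z) = Ufun N q z := by
  set p : ℂ := (q : ℂ) ^ (2 * N) with hp
  have hqc : (q : ℂ) ≠ 0 := by exact_mod_cast hq0.ne'
  have hp0 : p ≠ 0 := pow_ne_zero _ hqc
  have hp1 : ‖p‖ < 1 := by
    rw [hp, norm_pow, Complex.norm_real, Real.norm_eq_abs, abs_of_pos hq0]
    exact pow_lt_one₀ hq0.le hq1 (by omega)
  have hz2 : z ^ 2 ≠ 0 := pow_ne_zero _ hz
  have hzi : z⁻¹ ≠ 0 := inv_ne_zero hz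
  have hzi2 : z⁻¹ ^ 2 ≠ 0 := pow_ne_zero _ hzi
  have hu1 : (q : ℂ) ^ 2 * z ^ 2 ≠ 0 := mul_ne_zero (pow_ne_zero _ hqc) hz2
  have hu2 : (q : ℂ) ^ 2 * z⁻¹ ^ 2 ≠ 0 := mul_ne_zero (pow_ne_zero _ hqc) hzi2
  set w : ℂ := ((q : ℂ) ^ N)⁻¹ * z with hw
  have hqN : ((q : ℂ) ^ N) ≠ 0 := pow_ne_zero _ hqc
  have hwsq : w ^ 2 = p⁻¹ * z ^ 2 := by
    rw [hw, hp, mul_pow, inv_pow, ← pow_mul, Nat.mul_comm N 2]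
  have hwinv : w⁻¹ ^ 2 = p * z⁻¹ ^ 2 := by
    rw [hw, mul_inv, inv_inv, mul_pow, ← pow_mul, hp]
    ring
  have h1 : (q : ℂ) ^ 2 * w ^ 2 = p⁻¹ * ((q : ℂ) ^ 2 * z ^ 2) := by rw [hwsq]; ring
  have h2 : (q : ℂ) ^ 2 * w⁻¹ ^ 2 = p * ((q : ℂ) ^ 2 * z⁻¹ ^ 2) := by rw [hwinv]; ring
  have A1 := theta_shift_inv p ((q : ℂ) ^ 2 * z ^ 2) hp1 hp0 hu1
  have A2 := theta_shift p ((q : ℂ) ^ 2 * z⁻¹ ^ 2) hp1 hp0 hu2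
  have B1 := theta_shift_inv p (z ^ 2) hp1 hp0 hz2
  have B2 := theta_shift p (z⁻¹ ^ 2) hp1 hp0 hzi2
  rw [Ufun, Ufun, h1, h2, hwsq, hwinv, A1, A2, B1, B2]
  set C : ℂ := ((q ^ ((2 : ℝ) / N - 2) : ℝ) : ℂ)
  set T1 := ThetaF p ((q : ℂ) ^ 2 * z ^ 2)
  set T2 := ThetaF p ((q : ℂ) ^ 2 * z⁻¹ ^ 2)
  set T3 := ThetaF p (z ^ 2)
  set T4 := ThetaF p (z⁻¹ ^ 2)
  have hlam : p⁻¹ * z ^ 4 ≠ 0 := mul_ne_zero (inv_ne_zero hp0) (pow_ne_zero _ hz)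
  have en : C * (-(p⁻¹ * ((q : ℂ) ^ 2 * z ^ 2)) * T1 * (-((q : ℂ) ^ 2 * z⁻¹ ^ 2)⁻¹ * T2)) =
      (p⁻¹ * z ^ 4) * (C * (T1 * T2)) := by
    field_simp
  have ed : -(p⁻¹ * z ^ 2) * T3 * (-(z⁻¹ ^ 2)⁻¹ * T4) = (p⁻¹ * z ^ 4) * (T3 * T4) := by
    field_simp
  rw [en, ed, mul_div_mul_left _ _ hlam]

lemma U_shift_iter (N : ℕ) (hNpos : 0 < N) (q : ℝ) (hq0 : 0 < q) (hq1 : q < 1)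
    (j : ℕ) (z : ℂ) (hz : z ≠ 0) :
    Ufun N q ((((q : ℂ) ^ N)⁻¹) ^ j * z) = Ufun N q z := by
  induction j with
  | zero => rw [pow_zero, one_mul]
  | succ j ih =>
    have hqc : (q : ℂ) ≠ 0 := by exact_mod_cast hq0.ne'
    have hqN : (((q : ℂ) ^ N)⁻¹) ≠ 0 := inv_ne_zero (pow_ne_zero _ hqc)
    have harg : (((q : ℂ) ^ N)⁻¹) ^ (j + 1) * z
        = ((q : ℂ) ^ N)⁻¹ * ((((q : ℂ) ^ N)⁻¹) ^ j * z) := by ring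
    rw [harg, U_shift N hNpos q hq0 hq1 _ (mul_ne_zero (pow_ne_zero _ hqN) hz), ih]

lemma Ufun_ne_zero (N : ℕ) (q : ℝ) (hq0 : 0 < q) (w : ℂ) (h : thetaReg N q w) :
    Ufun N q w ≠ 0 := by
  obtain ⟨h1, h2, h3, h4⟩ := h
  have hC : ((q ^ ((2 : ℝ) / N - 2) : ℝ) : ℂ) ≠ 0 := by
    exact_mod_cast (Real.rpow_pos_of_pos hq0 _).ne'
  exact div_ne_zero (mul_ne_zero hC (mul_ne_zero h1 h2)) (mul_ne_zero h3 h4)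

lemma Ffun_prod_one (N : ℕ) (hNpos : 0 < N) (q : ℝ) (hq0 : 0 < q) (hq1 : q < 1)
    (u x : ℂ) (hu : u ≠ 0) (hx : x ≠ 0) (n : ℤ) (hn : 0 < n) (M : ℕ)
    (hM : u ^ n = (((q : ℂ) ^ N)⁻¹) ^ M)
    (hreg : ∀ k : ℤ, |k| ≤ n → thetaReg N q (u ^ k * x)) :
    Ffun N q u x n * Ffun N q u x (-n) = 1 := by
  have hnn : ¬ (0 < -n) := by omega
  rw [Ffun, Ffun, if_pos hn, if_neg hnn, neg_neg]
  set m := n.toNat with hm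
  have hmn : (m : ℤ) = n := Int.toNat_of_nonneg hn.le
  rw [← Finset.prod_range_reflect (fun k => Ufun N q (u ^ k * x)) m, ← Finset.prod_mul_distrib]
  apply Finset.prod_eq_one
  intro k hk
  have hkm : k < m := Finset.mem_range.mp hk
  have harg : u ^ (m - 1 - k) * x = (((q : ℂ) ^ N)⁻¹) ^ M * (u ^ (-(k : ℤ) - 1) * x) := by
    rw [← hM, ← zpow_natCast u (m - 1 - k)]
    have hc : ((m - 1 - k : ℕ) : ℤ) = n + (-(k : ℤ) - 1) := by omega
    rw [hc, zpow_add₀ hu]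
    ring
  have hzarg : u ^ (-(k : ℤ) - 1) * x ≠ 0 := mul_ne_zero (zpow_ne_zero _ hu) hx
  rw [harg, U_shift_iter N hNpos q hq0 hq1 M _ hzarg]
  refine mul_inv_cancel₀ (Ufun_ne_zero N q hq0 _ (hreg (-(k : ℤ) - 1) ?_))
  rw [abs_le]
  constructor <;> omega

lemma rpow_zpow_helper (q : ℝ) (hq0 : 0 < q) (c d : ℝ) (m : ℤ) (h : c * m = d) :
    ((q ^ c : ℝ) : ℂ) ^ m = ((q ^ d : ℝ) : ℂ) := by
  rw [← Complex.ofReal_zpow, ← Real.rpow_intCast (q ^ c) m, ← Real.rpow_mul hq0.le, h]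

lemma rpow_npow_helper (q : ℝ) (hq0 : 0 < q) (c d : ℝ) (m : ℕ) (h : c * m = d) :
    ((q ^ c : ℝ) : ℂ) ^ m = ((q ^ d : ℝ) : ℂ) := by
  rw [← Complex.ofReal_pow, ← Real.rpow_natCast (q ^ c) m, ← Real.rpow_mul hq0.le, h]

/-- Abelianity for `m + n = 0` with `n > 0` odd: with `s = q^{−N(n−1)/(2n)}` and
`t = q^{−N(n+1)/(2n)}`, the surface condition `s^{−n} t^n = q^{−N}` holds and
`Y_{−n,n}(x;s,t) = 1` at every nonzero `x` where all theta factors occurring are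
nonzero. -/
theorem Yfun_abelian_opposite (N : ℕ) (hN : 2 ≤ N) (q : ℝ) (hq0 : 0 < q) (hq1 : q < 1)
    (n : ℤ) (hn : 0 < n) (hodd : Odd n)
    (s t : ℂ)
    (hsdef : s = ((q ^ (-(N : ℝ) * ((n : ℝ) - 1) / (2 * (n : ℝ))) : ℝ) : ℂ))
    (htdef : t = ((q ^ (-(N : ℝ) * ((n : ℝ) + 1) / (2 * (n : ℝ))) : ℝ) : ℂ)) :
    s ^ (-n) * t ^ n = (q : ℂ) ^ (-(N : ℤ)) ∧
    ∀ x : ℂ, x ≠ 0 →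
      (∀ k : ℤ, |k| ≤ n → thetaReg N q (s ^ k * x)) →
      (∀ k : ℤ, |k| ≤ n → thetaReg N q (t ^ k * x)) →
      Yfun N q s t x (-n) n = 1 := by
  obtain ⟨l, hl⟩ := hodd
  have hl0 : 0 ≤ l := by omega
  have hNpos : 0 < N := by omega
  have hnR : (n : ℝ) ≠ 0 := by exact_mod_cast hn.ne'
  have hqc : (q : ℂ) ≠ 0 := by exact_mod_cast hq0.ne'
  set a : ℝ := -(N : ℝ) * ((n : ℝ) - 1) / (2 * (n : ℝ)) with ha
  set b : ℝ := -(N : ℝ) * ((n : ℝ) + 1) / (2 * (n : ℝ)) with hb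
  -- the inverse-of-q^N expressed as a real power
  have hqNinv : (((q : ℂ) ^ N)⁻¹) = ((q ^ (-(N : ℝ)) : ℝ) : ℂ) := by
    rw [Real.rpow_neg hq0.le, Real.rpow_natCast]
    norm_cast
  constructor
  · have hexp : a * ((-n : ℤ) : ℝ) + b * ((n : ℤ) : ℝ) = -(N : ℝ) := by
      rw [ha, hb]
      push_cast
      field_simp
      ring
    rw [hsdef, htdef, rpow_zpow_helper q hq0 a _ (-n) rfl,
      rpow_zpow_helper q hq0 b _ n rfl, ← Complex.ofReal_mul,
      ← Real.rpow_add hq0, hexp, ← Complex.ofReal_zpow, ← Real.rpow_intCast q (-(N : ℤ))]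
    norm_num
  · intro x hx hregs hregt
    have hs0 : s ≠ 0 := by
      rw [hsdef]
      exact_mod_cast (Real.rpow_pos_of_pos hq0 _).ne'
    have ht0 : t ≠ 0 := by
      rw [htdef]
      exact_mod_cast (Real.rpow_pos_of_pos hq0 _).ne'
    have hlt : ((l.toNat : ℝ)) = (l : ℝ) := by
      exact_mod_cast congrArg Int.cast (Int.toNat_of_nonneg hl0)
    have hnl : (n : ℝ) = 2 * (l : ℝ) + 1 := by exact_mod_cast congrArg Int.cast hl
    have h2l : (2 * (l : ℝ) + 1) ≠ 0 := hnl ▸ hnR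
    have htn : t ^ n = (((q : ℂ) ^ N)⁻¹) ^ (l.toNat + 1) := by
      have hexp : b * ((n : ℤ) : ℝ) = -(N : ℝ) * ((l.toNat + 1 : ℕ) : ℝ) := by
        rw [hb]
        push_cast
        rw [hlt, hnl]
        field_simp
        ring
      rw [htdef, rpow_zpow_helper q hq0 b _ n rfl, hqNinv,
        rpow_npow_helper q hq0 (-(N : ℝ)) _ (l.toNat + 1) rfl, hexp]
    have hsn : s ^ n = (((q : ℂ) ^ N)⁻¹) ^ l.toNat := by
      have hexp : a * ((n : ℤ) : ℝ) = -(N : ℝ) * ((l.toNat : ℕ) : ℝ) := by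
        rw [ha]
        push_cast
        rw [hlt, hnl]
        field_simp
        ring
      rw [hsdef, rpow_zpow_helper q hq0 a _ n rfl, hqNinv,
        rpow_npow_helper q hq0 (-(N : ℝ)) _ l.toNat rfl, hexp]
    have Ht := Ffun_prod_one N hNpos q hq0 hq1 t x ht0 hx n hn (l.toNat + 1) htn hregt
    have Hs := Ffun_prod_one N hNpos q hq0 hq1 s x hs0 hx n hn l.toNat hsn hregs
    rw [Yfun, neg_neg, Ht, mul_comm (Ffun N q s x (-n)) (Ffun N q s x n), Hs]
    norm_num
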